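/- In any pca 𝔸, the following are equivalent: (a) the element b with b·a ≃ a·a has no total extension in 𝔸; (b) some element of 𝔸 has no total extension in 𝔸. In particular, if the application function d·⟨a,b⟩ ≃ a·b, viewed via an element d with d·x ≃ (x·U²₁)·(x·U²₂), has a total extension then every element has a total extension. -/
import Mathlib


/-- Partial application lifted to `Option` (strict: defined iff both sides defined). -/
def pap {A : Type*} (f : A → A → Option A) (x y : Option A) : Option A :=
  x.bind fun a => y.bind fun b => f a b

/-- A partial combinatory algebra, via Feferman's characterization with combinators `k`, `s`. -/
structure PCA (A : Type*) where
  app : A → A → Option A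
  k : A
  s : A
  k_spec : ∀ a b : A, pap app (pap app (some k) (some a)) (some b) = some a
  s_defined : ∀ a b : A, (pap app (pap app (some s) (some a)) (some b)).isSome
  s_spec : ∀ a b c : A,
    pap app (pap app (pap app (some s) (some a)) (some b)) (some c)
      = pap app (pap app (some a) (some c)) (pap app (some b) (some c))

namespace PCA
variable {A : Type*}

/-- Application on (possibly undefined) terms. -/
def ap (P : PCA A) (x y : Option A) : Option A := pap P.app x y

def K' (P : PCA A) : Option A := some P.k
def S' (P : PCA A) : Option A := some P.s
/-- The identity combinator `i = s·k·k`. -/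
def i (P : PCA A) : Option A := P.ap (P.ap P.S' P.K') P.K'
/-- `true = k`. -/
def tru (P : PCA A) : Option A := P.K'
/-- `false = k·i`. -/
def fls (P : PCA A) : Option A := P.ap P.K' P.i
/-- Pairing `⟨a,b⟩ = λ*z. z·a·b`, implemented as `s·(s·i·(k·a))·(k·b)`. -/
def pair (P : PCA A) (x y : Option A) : Option A :=
  P.ap (P.ap P.S' (P.ap (P.ap P.S' P.i) (P.ap P.K' x))) (P.ap P.K' y)
/-- Numerals: `0̄ = i`, `(n+1)‾ = ⟨false, n̄⟩`. -/
def numeral (P : PCA A) : ℕ → Option A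
  | 0 => P.i
  | n + 1 => P.pair P.fls (P.numeral n)
/-- An element is total if it is defined on every argument. -/
def total (P : PCA A) (f : A) : Prop := ∀ a : A, (P.app f a).isSome

end PCA

/-- `f` is a total extension of `b` in the pca `P`. -/
def PCA.TotalExt {A : Type*} (P : PCA A) (b f : A) : Prop :=
  P.total f ∧ ∀ a : A, (P.app b a).isSome → P.app f a = P.app b a

-- auxiliary lemmas
namespace PCAaux
variable {A : Type*}

lemma ap_some (P : PCA A) (a b : A) : P.ap (some a) (some b) = P.app a b := rfl

lemma kdef (P : PCA A) (a : A) :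
    ∃ u, P.app P.k a = some u ∧ ∀ b, P.app u b = some a := by
  cases hu : P.app P.k a with
  | none =>
    have h := P.k_spec a a
    rw [show pap P.app (some P.k) (some a) = P.app P.k a from rfl, hu] at h
    simp [pap] at h
  | some u =>
    refine ⟨u, rfl, fun b => ?_⟩
    have hb := P.k_spec a b
    rw [show pap P.app (some P.k) (some a) = P.app P.k a from rfl, hu] at hb
    exact hb

lemma sdef1 (P : PCA A) (a : A) :
    ∃ u, P.app P.s a = some u ∧ ∀ b, ∃ v, P.app u b = some v ∧
      ∀ c, P.app v c = P.ap (P.app a c) (P.app b c) := by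
  cases hu : P.app P.s a with
  | none =>
    have h := P.s_defined a a
    rw [show pap P.app (some P.s) (some a) = P.app P.s a from rfl, hu] at h
    simp [pap] at h
  | some u =>
    refine ⟨u, rfl, fun b => ?_⟩
    have h := P.s_defined a b
    rw [show pap P.app (some P.s) (some a) = P.app P.s a from rfl, hu] at h
    cases hv : P.app u b with
    | none =>
      rw [show pap P.app (some u) (some b) = P.app u b from rfl, hv] at h
      simp at h
    | some v =>
      refine ⟨v, rfl, fun c => ?_⟩
      have hs := P.s_spec a b c
      rw [show pap P.app (some P.s) (some a) = P.app P.s a from rfl, hu,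
        show pap P.app (some u) (some b) = P.app u b from rfl, hv] at hs
      exact hs

end PCAaux

open PCAaux in
/-- The diagonal element has no total extension iff some element has no total
extension; in particular if the universal element has a total extension, then
every element has one. -/
theorem diagonal_no_total_extension_iff {A : Type*} (P : PCA A) :
    (∀ b : A, (∀ a : A, P.app b a = P.app a a) →
      ((¬ ∃ f : A, P.TotalExt b f) ↔ ∃ c : A, ¬ ∃ f : A, P.TotalExt c f)) ∧
    (∀ d : A, (∀ x : A, P.app d x = P.ap (P.ap (some x) P.tru) (P.ap (some x) P.fls)) →
      (∃ f : A, P.TotalExt d f) → ∀ b : A, ∃ f : A, P.TotalExt b f) := by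
  constructor
  · intro b hb
    constructor
    · intro h; exact ⟨b, h⟩
    · rintro ⟨c, hc⟩ ⟨f, hf⟩
      apply hc
      -- build a total extension of c from f
      obtain ⟨Kc, hKc, hKcS⟩ := kdef P c
      obtain ⟨SKc, hSKc, hSKcS⟩ := sdef1 P Kc
      obtain ⟨KS, hKS, hKSS⟩ := kdef P SKc
      obtain ⟨U, hU, hUS⟩ := sdef1 P KS
      obtain ⟨gc, hgc, hgcS⟩ := hUS P.k
      obtain ⟨Kf, hKf, hKfS⟩ := kdef P f
      obtain ⟨V, hV, hVS⟩ := sdef1 P Kf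
      obtain ⟨h, hh, hhS⟩ := hVS gc
      -- for each x, identify w with h·x = f·w and w·w = c·x
      have key : ∀ x : A, ∃ w : A, P.app h x = P.app f w ∧ P.app w w = P.app c x := by
        intro x
        obtain ⟨Kx, hKx, hKxS⟩ := kdef P x
        obtain ⟨w, hw, hwS⟩ := hSKcS Kx
        refine ⟨w, ?_, ?_⟩
        · rw [hhS x, hKfS x, hgcS x, hKSS x, hKx, ap_some, hw, ap_some]
        · rw [hwS w, hKcS w, hKxS w, ap_some]
      refine ⟨h, fun x => ?_, fun x hx => ?_⟩
      · obtain ⟨w, h1, _⟩ := key x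
        rw [h1]; exact hf.1 w
      · obtain ⟨w, h1, h2⟩ := key x
        have hbw : P.app b w = P.app c x := by rw [hb w, h2]
        rw [h1, hf.2 w (by rw [hbw]; exact hx), hbw]
  · rintro d hd ⟨f, hf⟩ b
    -- basic combinators
    obtain ⟨U0, hU0, hU0S⟩ := sdef1 P P.k
    obtain ⟨I, hI, hIS⟩ := hU0S P.k
    have hIid : ∀ a : A, P.app I a = some a := by
      intro a
      obtain ⟨Ka, hKa, hKaS⟩ := kdef P a
      rw [hIS a, hKa, ap_some, hKaS Ka]
    have hi : P.i = some I := by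
      show P.ap (P.ap (some P.s) (some P.k)) (some P.k) = some I
      rw [ap_some, hU0, ap_some, hI]
    obtain ⟨F, hF, hFS⟩ := kdef P I
    have hfls : P.fls = some F := by
      show P.ap (some P.k) P.i = some F
      rw [hi, ap_some, hF]
    -- A' = s·i·(k·b), with A'·z = z·b
    obtain ⟨Kb, hKb, hKbS⟩ := kdef P b
    obtain ⟨SI, hSI, hSIS⟩ := sdef1 P I
    obtain ⟨A', hA', hA'S⟩ := hSIS Kb
    obtain ⟨SA', hSA', hSA'S⟩ := sdef1 P A'
    -- Q = s·(k·SA')·k, with Q·x = SA'·(k·x) = pair b x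
    obtain ⟨KSA', hKSA', hKSA'S⟩ := kdef P SA'
    obtain ⟨UQ, hUQ, hUQS⟩ := sdef1 P KSA'
    obtain ⟨Q, hQ, hQS⟩ := hUQS P.k
    -- e = s·(k·f)·Q
    obtain ⟨Kf, hKf, hKfS⟩ := kdef P f
    obtain ⟨V, hV, hVS⟩ := sdef1 P Kf
    obtain ⟨e, he, heS⟩ := hVS Q
    have key : ∀ x : A, ∃ p : A, P.app e x = P.app f p ∧ P.app d p = P.app b x := by
      intro x
      obtain ⟨Kx, hKx, hKxS⟩ := kdef P x
      obtain ⟨p, hp, hpS⟩ := hSA'S Kx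
      have hpz : ∀ z : A, P.app p z = P.ap (P.app z b) (some x) := by
        intro z
        rw [hpS z, hA'S z, hIS z]
        obtain ⟨Kz, hKz, hKzS⟩ := kdef P z
        rw [hKz, ap_some, hKzS Kz, hKbS z, ap_some, hKxS z]
      refine ⟨p, ?_, ?_⟩
      · rw [heS x, hKfS x, hQS x, hKSA'S x, hKx, ap_some, hp, ap_some]
      · rw [hd p]
        have h1 : P.ap (some p) P.tru = some b := by
          show P.ap (some p) (some P.k) = some b
          rw [ap_some, hpz P.k, hKb, ap_some, hKbS x]
        have h2 : P.ap (some p) P.fls = some x := by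
          rw [hfls, ap_some, hpz F, hFS b, ap_some, hIid x]
        rw [h1, h2, ap_some]
    refine ⟨e, fun x => ?_, fun x hx => ?_⟩
    · obtain ⟨p, h1, _⟩ := key x
      rw [h1]; exact hf.1 p
    · obtain ⟨p, h1, h2⟩ := key x
      rw [h1, hf.2 p (by rw [h2]; exact hx), h2]
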